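/- GARP implies rationalizability: if bids (b^t)_{t \in [T]} and prices (p^t)_{t \in [T]} satisfy the GARP condition \sum_{k=1}^{k'} (b^{t_{k+1}} - b^{t_k})^T p^{t_k} \geq 0 for every finite cycle of distinct rounds t_1, ..., t_{k'} (with t_{k'+1} = t_1), then the system of inequalities \zeta^t - p^{t\,T} b^t \geq \zeta^s - p^{t\,T} b^s for all s, t \in [T] has a solution (\zeta^t)_{t \in [T]}. -/

import Mathlib

open Matrix Finset

variable {α : Type*}

/-- Cost of a path given edge costs `c`. -/
def pcost (c : α → α → ℝ) : List α → ℝ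
  | [] => 0
  | [_] => 0
  | x :: y :: r => c x y + pcost c (y :: r)

lemma pcost_split (c : α → α → ℝ) (x : α) (B : List α) :
    ∀ A : List α, pcost c (A ++ x :: B) = pcost c (A ++ [x]) + pcost c (x :: B) := by
  intro A
  induction A with
  | nil => simp [pcost]
  | cons a A ih =>
    cases A with
    | nil => cases B <;> simp [pcost]
    | cons a' A' =>
      simp only [List.cons_append, pcost, List.append_eq] at ih ⊢
      rw [ih]; ring

lemma pcost_concat (c : α → α → ℝ) (s : α) :
    ∀ (a : α) (r : List α),
      pcost c ((a :: r) ++ [s]) = pcost c (a :: r) + c ((a :: r).getLast (by simp)) s := by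
  intro a r
  induction r generalizing a with
  | nil => simp [pcost]
  | cons y r' ih =>
    have hgl : (a :: y :: r').getLast (by simp) = (y :: r').getLast (by simp) :=
      List.getLast_cons (by simp)
    simp only [List.cons_append] at ih ⊢
    rw [show pcost c (a :: y :: (r' ++ [s])) = c a y + pcost c (y :: (r' ++ [s])) from rfl,
      ih y, hgl]
    simp [pcost]; ring

lemma pcost_adj (c : α → α → ℝ) :
    ∀ (r : List α) (a : α),
      ∑ k : Fin r.length, c ((a :: r).get k.castSucc) ((a :: r).get k.succ)
        = pcost c (a :: r) := by
  intro r
  induction r with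
  | nil => intro a; simp [pcost]
  | cons y r' ih =>
    intro a
    show ∑ k : Fin (r'.length + 1), c ((a :: y :: r').get k.castSucc) ((a :: y :: r').get k.succ)
        = pcost c (a :: y :: r')
    rw [Fin.sum_univ_succ]
    have h2 : ∀ k : Fin r'.length,
        c ((a :: y :: r').get k.succ.castSucc) ((a :: y :: r').get k.succ.succ)
          = c ((y :: r').get k.castSucc) ((y :: r').get k.succ) := fun k => rfl
    simp only [h2]
    rw [ih y]
    rfl

lemma pcost_cycle (c : α → α → ℝ) (a : α) (r : List α) :
    ∑ k : Fin (r.length + 1), c ((a :: r).get k) ((a :: r).get ((k + 1 : Fin (r.length + 1))))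
      = pcost c (a :: r) + c ((a :: r).getLast (by simp)) a := by
  rw [Fin.sum_univ_castSucc]
  congr 1
  · rw [← pcost_adj c r a]
    refine Finset.sum_congr rfl fun k _ => ?_
    rw [Fin.coeSucc_eq_succ]
  · rw [Fin.last_add_one]
    congr 1
    simp [List.getLast_eq_getElem, List.get_eq_getElem]

/-- GARP implies rationalizability: if bids and prices satisfy nonnegative cost on
every cycle of distinct rounds (with cyclic successor `k + 1` in `Fin k'`), then the
Afriat inequalities `ζᵗ - pᵗᵀbᵗ ≥ ζˢ - pᵗᵀbˢ` are feasible. -/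
theorem stmt_18 {N T : ℕ} (b p : Fin T → Fin N → ℝ)
    (hGARP : ∀ (k' : ℕ) [NeZero k'] (t : Fin k' → Fin T), Function.Injective t →
      0 ≤ ∑ k : Fin k', (b (t (k + 1)) - b (t k)) ⬝ᵥ p (t k)) :
    ∃ ζ : Fin T → ℝ, ∀ s t : Fin T,
      ζ s - p t ⬝ᵥ b s ≤ ζ t - p t ⬝ᵥ b t := by
  classical
  set c : Fin T → Fin T → ℝ := fun t s => (b s - b t) ⬝ᵥ p t with hc
  -- paths ending at v
  set P : Fin T → Set (List (Fin T)) :=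
    fun v => {l | l.Nodup ∧ l.getLast? = some v} with hP
  have hPfin : ∀ v, (pcost c '' P v).Finite := by
    intro v
    apply Set.Finite.image
    apply Set.Finite.subset (List.finite_length_le (Fin T) T)
    intro l hl
    exact hl.1.length_le_card.trans (by simp)
  have hPne : ∀ v, (pcost c '' P v).Nonempty := by
    intro v
    exact ⟨pcost c [v], ⟨[v], ⟨by simp, by simp⟩, rfl⟩⟩
  set ζ : Fin T → ℝ := fun v => sInf (pcost c '' P v) with hζ
  have hζ_le : ∀ v l, l ∈ P v → ζ v ≤ pcost c l := fun v l hl =>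
    csInf_le (hPfin v).bddBelow ⟨l, hl, rfl⟩
  have key : ∀ s t : Fin T, ζ s ≤ ζ t + c t s := by
    intro s t
    obtain ⟨l, hlP, hl⟩ := (hPne t).csInf_mem (hPfin t)
    have hlt : ζ t = pcost c l := hl.symm
    rw [hlt]
    obtain ⟨hnd, hlast⟩ := hlP
    have hne : l ≠ [] := by rintro rfl; simp at hlast
    have hlastt : l.getLast hne = t := by
      rw [List.getLast?_eq_getLast_of_ne_nil hne] at hlast
      exact Option.some_injective _ hlast
    by_cases hs : s ∈ l
    · -- s is already on the path: cut and use GARP on the cycle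
      obtain ⟨l1, l2, rfl⟩ := List.append_of_mem hs
      have h1 : ζ s ≤ pcost c (l1 ++ [s]) := by
        apply hζ_le
        refine ⟨hnd.sublist (List.Sublist.append_left (by simp) l1), by simp⟩
      have hsplit := pcost_split c s l2 l1
      have hlast2 : (s :: l2).getLast (by simp) = t := by
        rw [← hlastt]
        exact (List.getLast_append_of_right_ne_nil l1 (s :: l2) (by simp)).symm
      have hnd2 : (s :: l2).Nodup := hnd.sublist (by simp)
      have : NeZero (l2.length + 1) := ⟨by simp⟩
      have hgarp := hGARP (l2.length + 1)
        (t := fun k : Fin (l2.length + 1) => (s :: l2).get k)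
        (List.nodup_iff_injective_get.mp hnd2)
      have hcyc := pcost_cycle c s l2
      have hge : 0 ≤ pcost c (s :: l2) + c t s := by
        rw [← hlast2, ← hcyc]
        exact hgarp
      calc ζ s ≤ pcost c (l1 ++ [s]) := h1
        _ ≤ pcost c (l1 ++ [s]) + (pcost c (s :: l2) + c t s) := by linarith
        _ = pcost c (l1 ++ s :: l2) + c t s := by rw [hsplit]; ring
    · -- extend the path by s
      have h1 : ζ s ≤ pcost c (l ++ [s]) := by
        apply hζ_le
        refine ⟨by simp [List.Nodup.append, hnd, hs], by simp⟩
      obtain ⟨a, r, rfl⟩ := List.exists_cons_of_ne_nil hne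
      rw [pcost_concat c s a r, hlastt] at h1
      linarith
  refine ⟨ζ, fun s t => ?_⟩
  have h1 := key s t
  have hcts : c t s = p t ⬝ᵥ b s - p t ⬝ᵥ b t := by
    simp [hc, sub_dotProduct, dotProduct_comm]
  rw [hcts] at h1
  linarith
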